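/- Let P be a path in T with vertex sequence p(1),…,p(k), let u be a vertex not on P that is adjacent in T to the endpoint p(k), and let P' = P ∪ {u}. For a vertex p of a path R write s_p(R)=(1/vt)·d̄_R(û,p). Then s_{p(i)}(P') = s_{p(i)}(P) + (1/vt)·w_{T_u}·d(P,u) for every i=1,…,k, and s_u(P') = s_{p(k)}(P) + (1/vt)·(w(T) − w_{T_u})·d(P,u). -/

import Mathlib

open scoped ENNReal

noncomputable section

/-- A finite tree with positive edge lengths, nonnegative vertex weights,
and a positive cruising speed. -/
structure WeightedTree (V : Type*) [Fintype V] where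
  G : SimpleGraph V
  isTree : G.IsTree
  len : Sym2 V → ℝ
  len_pos : ∀ e ∈ G.edgeSet, 0 < len e
  w : V → ℝ
  w_nonneg : ∀ v, 0 ≤ w v
  vt : ℝ
  vt_pos : 0 < vt

namespace WeightedTree

variable {V : Type*} [Fintype V] [DecidableEq V] (T : WeightedTree V)

/-- `d x y`: the length of the unique path between `x` and `y`. -/
def d (x y : V) : ℝ :=
  (((T.isTree.existsUnique_path x y).choose).edges.map T.len).sum

/-- The closest vertex of the list `l` (the vertex sequence of a path) to `v`. -/
def closest (l : List V) (v : V) : V :=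
  if h : ∃ u ∈ l, ∀ u' ∈ l, T.d u v ≤ T.d u' v then h.choose else v

/-- `d(P,v)`: the distance from the path with vertex sequence `l` to `v`. -/
def dP (l : List V) (v : V) : ℝ := T.d (T.closest l v) v

/-- The weight of the branch of the vertex `q` with respect to the path with
vertex sequence `l`: the total weight of all vertices whose closest vertex on
the path is `q`. -/
def wBranch (l : List V) (q : V) : ℝ :=
  ∑ v ∈ Finset.univ.filter (fun v => T.closest l v = q), T.w v

/-- `w(T)`: total weight of the tree. -/
def wT : ℝ := ∑ v, T.w v

/-- `d̄_P(û,p) = ∑_j w_{T_{p(j)}} d(p(j), p)` for the path with vertex sequence `l`. -/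
def dbar (l : List V) (p : V) : ℝ := (l.map (fun q => T.wBranch l q * T.d q p)).sum

/-- `s_p(P) = (1/vt) d̄_P(û,p)` for a vertex `p` of the path. -/
def sOn (l : List V) (p : V) : ℝ := (1 / T.vt) * T.dbar l p

/-- `s_i(P) = (1/vt) d̄_P(û,p(i))`, where `p(i)` is the closest vertex of the path to `v_i`. -/
def s (l : List V) (v : V) : ℝ := T.sOn l (T.closest l v)

/-- Mean service time `S̄(P)`. -/
def Sbar (l : List V) : ℝ := ∑ v, T.w v * T.s l v

/-- Second moment `S̄²(P)` of the service time. -/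
def S2bar (l : List V) : ℝ := ∑ v, T.w v * (T.s l v) ^ 2

/-- `T̄1(P) = (1/vt) ∑ w_i d(P, v_i)`. -/
def T1 (l : List V) : ℝ := (1 / T.vt) * ∑ v, T.w v * T.dP l v

/-- `T̄2(P) = (1/vt) ∑ w_i d̄_P(û, p(i))`. -/
def T2 (l : List V) : ℝ := (1 / T.vt) * ∑ v, T.w v * T.dbar l (T.closest l v)

/-- The M/G/1 queueing delay `Q̄(P)`, valued in `[0,∞]`. -/
def Qbar (lam : ℝ) (l : List V) : ℝ≥0∞ :=
  if 0 < 1 - lam * T.Sbar l then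
    ENNReal.ofReal (lam * T.S2bar l / (2 * (1 - lam * T.Sbar l)))
  else ⊤

/-- The M/G/1 queueing delay `Q̄(P)` as an extended real. -/
def QbarE (lam : ℝ) (l : List V) : EReal :=
  if 0 < 1 - lam * T.Sbar l then
    ((lam * T.S2bar l / (2 * (1 - lam * T.Sbar l)) : ℝ) : EReal)
  else ⊤

/-- `|P|`: the total length of the path `P`. -/
def plen {a b : V} (P : T.G.Walk a b) : ℝ := (P.edges.map T.len).sum

/-- The objective `F(P) = α1·|P| + α2·(β·(Q̄(P)+T̄2(P)) + (1-β)·T̄1(P))`. -/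
def F (α1 α2 β lam : ℝ) {a b : V} (P : T.G.Walk a b) : EReal :=
  ((α1 * T.plen P : ℝ) : EReal) +
    (α2 : EReal) *
      ((β : EReal) * (T.QbarE lam P.support + ((T.T2 P.support : ℝ) : EReal)) +
        (((1 - β) * T.T1 P.support : ℝ) : EReal))

end WeightedTree

section Helpers

open SimpleGraph

namespace WeightedTree

variable {V : Type*} [Fintype V] [DecidableEq V] (T : WeightedTree V)

lemma d_eq {x y : V} (W : T.G.Walk x y) (hW : W.IsPath) :
    T.d x y = (W.edges.map T.len).sum := by
  have h := (T.isTree.existsUnique_path x y).choose_spec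
  rw [WeightedTree.d, h.2 W hW]

lemma d_self (x : V) : T.d x x = 0 := by
  simpa using T.d_eq (SimpleGraph.Walk.nil : T.G.Walk x x) (by simp)

lemma d_comm (x y : V) : T.d x y = T.d y x := by
  have h := (T.isTree.existsUnique_path x y).choose_spec
  set W := (T.isTree.existsUnique_path x y).choose with hWdef
  rw [T.d_eq W h.1, T.d_eq W.reverse h.1.reverse]
  rw [SimpleGraph.Walk.edges_reverse, List.map_reverse, List.sum_reverse]

lemma plen_nonneg {x y : V} (W : T.G.Walk x y) : 0 ≤ (W.edges.map T.len).sum := by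
  apply List.sum_nonneg
  intro e he
  obtain ⟨e', he', rfl⟩ := List.mem_map.1 he
  exact le_of_lt (T.len_pos e' (W.edges_subset_edgeSet he'))

lemma d_nonneg (x y : V) : 0 ≤ T.d x y := by
  have h := (T.isTree.existsUnique_path x y).choose_spec
  rw [T.d_eq _ h.1]; exact T.plen_nonneg _

lemma d_pos {x y : V} (hxy : x ≠ y) : 0 < T.d x y := by
  have h := (T.isTree.existsUnique_path x y).choose_spec
  set W := (T.isTree.existsUnique_path x y).choose with hWdef
  rw [T.d_eq W h.1]
  cases W with
  | nil => exact absurd rfl hxy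
  | cons hadj W' =>
      rename_i c
      rw [SimpleGraph.Walk.edges_cons, List.map_cons, List.sum_cons]
      have hmem : s(x, c) ∈ (SimpleGraph.Walk.cons hadj W').edges := by simp
      have h1 : 0 < T.len s(x, c) :=
        T.len_pos _ ((SimpleGraph.Walk.cons hadj W').edges_subset_edgeSet hmem)
      have h2 : 0 ≤ (W'.edges.map T.len).sum := T.plen_nonneg W'
      linarith

lemma eq_of_d_eq_zero {x y : V} (h : T.d x y = 0) : x = y := by
  by_contra hne
  exact absurd h (ne_of_gt (T.d_pos hne))

lemma d_append {x y z : V} (W1 : T.G.Walk x y) (W2 : T.G.Walk y z)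
    (h : (W1.append W2).IsPath) : T.d x z = T.d x y + T.d y z := by
  rw [T.d_eq _ h, T.d_eq W1 h.of_append_left, T.d_eq W2 h.of_append_right,
    SimpleGraph.Walk.edges_append, List.map_append, List.sum_append]

lemma append_isPath {x y z : V} {p : T.G.Walk x y} {q : T.G.Walk y z}
    (hp : p.IsPath) (hq : q.IsPath)
    (hint : ∀ w ∈ p.support, w ∈ q.support → w = y) : (p.append q).IsPath := by
  rw [SimpleGraph.Walk.isPath_def, SimpleGraph.Walk.support_append]
  refine List.Nodup.append hp.support_nodup (hq.support_nodup.tail) ?_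
  intro w hw hw'
  have hwq : w ∈ q.support := List.mem_of_mem_tail hw'
  have hwy : w = y := hint w hw hwq
  have hynd : y ∉ q.support.tail := by
    have hnd := hq.support_nodup
    rw [q.support_eq_cons] at hnd
    exact (List.nodup_cons.1 hnd).1
  exact hynd (hwy ▸ hw')

lemma exists_path_between {a b m q : V} (P : T.G.Walk a b) (hP : P.IsPath)
    (hm : m ∈ P.support) (hq : q ∈ P.support) :
    ∃ R : T.G.Walk m q, R.IsPath ∧ R.support ⊆ P.support := by
  by_cases hmW : m ∈ (P.takeUntil q hq).support
  · exact ⟨(P.takeUntil q hq).dropUntil m hmW, (hP.takeUntil hq).dropUntil hmW,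
      fun x hx => P.support_takeUntil_subset hq
        ((P.takeUntil q hq).support_dropUntil_subset hmW hx)⟩
  · have hmD : m ∈ (P.dropUntil q hq).support := by
      have hspec := P.take_spec hq
      have : m ∈ ((P.takeUntil q hq).append (P.dropUntil q hq)).support := by
        rw [hspec]; exact hm
      rw [SimpleGraph.Walk.support_append, List.mem_append] at this
      rcases this with h | h
      · exact absurd h hmW
      · exact List.mem_of_mem_tail h
    refine ⟨((P.dropUntil q hq).takeUntil m hmD).reverse,
      ((hP.dropUntil hq).takeUntil hmD).reverse, fun x hx => ?_⟩
    rw [SimpleGraph.Walk.support_reverse, List.mem_reverse] at hx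
    exact P.support_dropUntil_subset hq ((P.dropUntil q hq).support_takeUntil_subset hmD hx)

/-- `m` is the meeting vertex of `v` with the path with vertex list `l`. -/
def IsMeet (l : List V) (v m : V) : Prop :=
  m ∈ l ∧ ∀ q ∈ l, T.d q v = T.d m v + T.d m q

lemma exists_meet {a b : V} (P : T.G.Walk a b) (hP : P.IsPath) (v : V) :
    ∃ m, T.IsMeet P.support v m := by
  -- first get a path from v to b, then find the first vertex on P
  have key : ∀ (x c : V) (W : T.G.Walk x c), W.IsPath → c ∈ P.support →
      ∃ m ∈ P.support, ∃ W1 : T.G.Walk x m, W1.IsPath ∧ W1.support ⊆ W.support ∧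
        (∀ y ∈ W1.support, y ∈ P.support → y = m) := by
    intro x c W
    induction W with
    | nil =>
        intro _ hc
        exact ⟨_, hc, SimpleGraph.Walk.nil, by simp, by simp,
          by intro y hy _; simpa using hy⟩
    | @cons x x' _ hadj W' ih =>
        intro hW hc
        by_cases hx : x ∈ P.support
        · exact ⟨x, hx, SimpleGraph.Walk.nil, by simp, by simp,
            by intro y hy _; simpa using hy⟩
        · obtain ⟨m, hm, W1, hW1, hsub, hint⟩ := ih hW.of_cons hc
          refine ⟨m, hm, SimpleGraph.Walk.cons hadj W1, ?_, ?_, ?_⟩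
          · rw [SimpleGraph.Walk.cons_isPath_iff]
            refine ⟨hW1, fun hxW1 => ?_⟩
            have : x ∈ W'.support := hsub hxW1
            rw [SimpleGraph.Walk.cons_isPath_iff] at hW
            exact hW.2 this
          · intro y hy
            rw [SimpleGraph.Walk.support_cons, List.mem_cons] at hy ⊢
            rcases hy with rfl | hy
            · exact Or.inl rfl
            · exact Or.inr (hsub hy)
          · intro y hy hyP
            rw [SimpleGraph.Walk.support_cons, List.mem_cons] at hy
            rcases hy with rfl | hy
            · exact absurd hyP hx
            · exact hint y hy hyP
  obtain ⟨W, hW⟩ := (T.isTree.existsUnique_path v b)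
  obtain ⟨m, hm, W1, hW1, _, hint⟩ := key v b W hW.1 P.end_mem_support
  refine ⟨m, hm, fun q hq => ?_⟩
  obtain ⟨R, hR, hRsub⟩ := T.exists_path_between P hP hm hq
  have happ : (W1.append R).IsPath :=
    T.append_isPath hW1 hR (fun w hw hw' => hint w hw (hRsub hw'))
  have := T.d_append W1 R happ
  rw [T.d_comm q v, this, T.d_comm v m]

lemma meet_unique {l : List V} {v m m' : V}
    (h : T.IsMeet l v m) (h' : T.IsMeet l v m') : m = m' := by
  have e1 := h.2 m' h'.1
  have e2 := h'.2 m h.1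
  have : T.d m m' + T.d m' m = 0 := by linarith
  have h1 := T.d_nonneg m m'
  have h2 := T.d_nonneg m' m
  exact T.eq_of_d_eq_zero (by linarith)

lemma closest_eq_of_isMeet {l : List V} {v m : V} (h : T.IsMeet l v m) :
    T.closest l v = m := by
  have hex : ∃ u ∈ l, ∀ u' ∈ l, T.d u v ≤ T.d u' v := by
    refine ⟨m, h.1, fun u' hu' => ?_⟩
    rw [h.2 u' hu']
    have := T.d_nonneg m u'
    linarith
  rw [WeightedTree.closest, dif_pos hex]
  obtain ⟨hc1, hc2⟩ := hex.choose_spec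
  have e1 := h.2 _ hc1
  have e2 := hc2 m h.1
  have h1 := T.d_nonneg m hex.choose
  exact (T.eq_of_d_eq_zero (by linarith)).symm

lemma isMeet_closest {a b : V} (P : T.G.Walk a b) (hP : P.IsPath) (v : V) :
    T.IsMeet P.support v (T.closest P.support v) := by
  obtain ⟨m, hm⟩ := T.exists_meet P hP v
  rwa [T.closest_eq_of_isMeet hm]

lemma closest_self {l : List V} {q : V} (hq : q ∈ l) : T.closest l q = q := by
  apply T.closest_eq_of_isMeet
  refine ⟨hq, fun q' hq' => ?_⟩
  rw [T.d_self, T.d_comm q' q]; ring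

end WeightedTree

end Helpers


/-- the per-vertex mean travel times `s_p(R) = (1/vt)·d̄_R(û,p)` after
extending the path `P` by an adjacent vertex `u`. -/
theorem sOn_concat {V : Type*} [Fintype V] [DecidableEq V] (T : WeightedTree V)
    {a b u : V} (P : T.G.Walk a b) (hP : P.IsPath)
    (hadj : T.G.Adj b u) (hu : u ∉ P.support) :
    (∀ q ∈ P.support,
        T.sOn (P.concat hadj).support q =
          T.sOn P.support q +
            (1 / T.vt) * T.wBranch (P.concat hadj).support u * T.dP P.support u) ∧
      T.sOn (P.concat hadj).support u =
        T.sOn P.support b +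
          (1 / T.vt) * (T.wT - T.wBranch (P.concat hadj).support u) * T.dP P.support u := by
  classical
  have hbL : b ∈ P.support := SimpleGraph.Walk.end_mem_support P
  have hcons : (SimpleGraph.Walk.cons hadj (SimpleGraph.Walk.nil : T.G.Walk u u)).IsPath := by
    rw [SimpleGraph.Walk.cons_isPath_iff]
    refine ⟨SimpleGraph.Walk.IsPath.nil, ?_⟩
    simp [hadj.ne]
  have hintbu : ∀ w ∈ P.support,
      w ∈ (SimpleGraph.Walk.cons hadj (SimpleGraph.Walk.nil : T.G.Walk u u)).support → w = b := by
    intro w hw hw'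
    simp only [SimpleGraph.Walk.support_cons, SimpleGraph.Walk.support_nil,
      List.mem_cons, List.mem_singleton] at hw'
    rcases hw' with rfl | hw'
    · rfl
    · rcases hw' with rfl | h
      · exact absurd hw hu
      · exact absurd h List.not_mem_nil
  have hP' : (P.concat hadj).IsPath := by
    rw [SimpleGraph.Walk.concat_eq_append]
    exact T.append_isPath hP hcons hintbu
  have hndL : P.support.Nodup := hP.support_nodup
  have hndL' : (P.concat hadj).support.Nodup := hP'.support_nodup
  have hL' : (P.concat hadj).support = P.support ++ [u] := by
    rw [SimpleGraph.Walk.support_concat]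
  have hmemL' : ∀ x, x ∈ (P.concat hadj).support ↔ x ∈ P.support ∨ x = u := by
    intro x; rw [hL']; simp
  -- the meeting vertex of u with P is b
  have hmeet_u : T.IsMeet P.support u b := by
    refine ⟨hbL, fun q hq => ?_⟩
    obtain ⟨R, hR, hRsub⟩ := T.exists_path_between P hP hq hbL
    have happ : (R.append (SimpleGraph.Walk.cons hadj SimpleGraph.Walk.nil)).IsPath := by
      apply T.append_isPath hR hcons
      intro w hw hw'
      simp only [SimpleGraph.Walk.support_cons, SimpleGraph.Walk.support_nil,
        List.mem_cons, List.mem_singleton] at hw'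
      rcases hw' with rfl | hw'
      · rfl
      · rcases hw' with rfl | h
        · exact absurd (hRsub hw) hu
        · exact absurd h List.not_mem_nil
    have hap := T.d_append R _ happ
    rw [hap, T.d_comm q b]; ring
  have hclosest_u : T.closest P.support u = b := T.closest_eq_of_isMeet hmeet_u
  have hdP : T.dP P.support u = T.d b u := by rw [WeightedTree.dP, hclosest_u]
  have hmeetL : ∀ v, T.IsMeet P.support v (T.closest P.support v) :=
    T.isMeet_closest P hP
  have hmeetL' : ∀ v, T.IsMeet (P.concat hadj).support v
      (T.closest (P.concat hadj).support v) := T.isMeet_closest _ hP'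
  have F2 : ∀ v, T.closest (P.concat hadj).support v ≠ u →
      T.closest (P.concat hadj).support v = T.closest P.support v := by
    intro v hne
    have hm' := hmeetL' v
    have hmem : T.closest (P.concat hadj).support v ∈ P.support := by
      rcases (hmemL' _).1 hm'.1 with h | h
      · exact h
      · exact absurd h hne
    have hM : T.IsMeet P.support v (T.closest (P.concat hadj).support v) :=
      ⟨hmem, fun q hq => hm'.2 q ((hmemL' q).2 (Or.inl hq))⟩
    exact (T.closest_eq_of_isMeet hM).symm ▸ rfl
  have F1 : ∀ v, T.closest (P.concat hadj).support v = u →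
      T.closest P.support v = b := by
    intro v heq
    have hm' := hmeetL' v
    rw [heq] at hm'
    apply T.closest_eq_of_isMeet
    refine ⟨hbL, fun q hq => ?_⟩
    have h1 := hm'.2 q ((hmemL' q).2 (Or.inl hq))
    have h2 := hm'.2 b ((hmemL' b).2 (Or.inl hbL))
    have h3 := hmeet_u.2 q hq
    rw [T.d_comm u q, h3] at h1
    rw [T.d_comm u b] at h2
    linarith
  set β := T.wBranch (P.concat hadj).support u with hβ
  have B1 : ∀ q ∈ P.support, q ≠ b →
      T.wBranch (P.concat hadj).support q = T.wBranch P.support q := by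
    intro q hq hqb
    simp only [WeightedTree.wBranch]
    congr 1
    apply Finset.filter_congr
    intro v _
    constructor
    · intro h
      have hne : T.closest (P.concat hadj).support v ≠ u := by
        rw [h]; rintro rfl; exact hu hq
      rw [← F2 v hne]; exact h
    · intro h
      by_cases hcu : T.closest (P.concat hadj).support v = u
      · exact absurd (h.symm.trans (F1 v hcu)) hqb
      · rw [F2 v hcu]; exact h
  have B2 : T.wBranch P.support b = T.wBranch (P.concat hadj).support b + β := by
    rw [hβ]
    simp only [WeightedTree.wBranch]
    have hdisj : Disjoint
        (Finset.univ.filter (fun v => T.closest (P.concat hadj).support v = b))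
        (Finset.univ.filter (fun v => T.closest (P.concat hadj).support v = u)) := by
      rw [Finset.disjoint_left]
      intro v hv1 hv2
      simp only [Finset.mem_filter] at hv1 hv2
      exact hadj.ne (hv1.2.symm.trans hv2.2)
    have hsplit : Finset.univ.filter (fun v => T.closest P.support v = b)
        = Finset.univ.filter (fun v => T.closest (P.concat hadj).support v = b)
          ∪ Finset.univ.filter (fun v => T.closest (P.concat hadj).support v = u) := by
      ext v
      simp only [Finset.mem_filter, Finset.mem_union, Finset.mem_univ, true_and]
      constructor
      · intro h
        by_cases hcu : T.closest (P.concat hadj).support v = u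
        · exact Or.inr hcu
        · exact Or.inl ((F2 v hcu).trans h)
      · rintro (h | h)
        · have hne : T.closest (P.concat hadj).support v ≠ u := by
            rw [h]; exact hadj.ne
          rw [← F2 v hne]; exact h
        · exact F1 v h
    rw [hsplit, Finset.sum_union hdisj]
  have hunotin : u ∉ P.support.toFinset := by simpa using hu
  have htF : (P.concat hadj).support.toFinset = insert u P.support.toFinset := by
    rw [hL']; ext x; simp [or_comm]
  have B3 : ∑ q ∈ (P.concat hadj).support.toFinset,
      T.wBranch (P.concat hadj).support q = T.wT := by
    simp only [WeightedTree.wBranch, WeightedTree.wT]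
    exact Finset.sum_fiberwise_of_maps_to
      (fun v _ => List.mem_toFinset.2 (hmeetL' v).1) T.w
  have hsum' : ∑ q ∈ P.support.toFinset, T.wBranch (P.concat hadj).support q
      = T.wT - β := by
    rw [htF, Finset.sum_insert hunotin] at B3
    linarith
  have hbF : b ∈ P.support.toFinset := List.mem_toFinset.2 hbL
  have hshift : ∀ g : V → ℝ,
      ∑ q ∈ P.support.toFinset, T.wBranch (P.concat hadj).support q * g q
      = (∑ q ∈ P.support.toFinset, T.wBranch P.support q * g q) - β * g b := by
    intro g
    rw [← Finset.add_sum_erase _ _ hbF,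
      ← Finset.add_sum_erase _ (fun q => T.wBranch P.support q * g q) hbF]
    have hcongr : ∀ q ∈ P.support.toFinset.erase b,
        T.wBranch (P.concat hadj).support q * g q = T.wBranch P.support q * g q := by
      intro q hq
      rw [B1 q (List.mem_toFinset.1 (Finset.mem_of_mem_erase hq))
        (Finset.ne_of_mem_erase hq)]
    rw [Finset.sum_congr rfl hcongr, B2]
    ring
  have hdbar : ∀ (l : List V), l.Nodup → ∀ p,
      T.dbar l p = ∑ q ∈ l.toFinset, T.wBranch l q * T.d q p := by
    intro l hnd p
    rw [WeightedTree.dbar]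
    exact (List.sum_toFinset _ hnd).symm
  constructor
  · intro q hq
    simp only [WeightedTree.sOn]
    rw [hdbar _ hndL' q, hdbar _ hndL q, htF, Finset.sum_insert hunotin]
    simp only [hshift]
    have hduq : T.d u q = T.d b u + T.d b q := by
      rw [T.d_comm u q]; exact hmeet_u.2 q hq
    rw [hdP, hduq]
    ring
  · simp only [WeightedTree.sOn]
    rw [hdbar _ hndL' u, hdbar _ hndL b, htF, Finset.sum_insert hunotin]
    have hsplit2 : ∀ q ∈ P.support.toFinset,
        T.wBranch (P.concat hadj).support q * T.d q u
        = T.wBranch (P.concat hadj).support q * T.d q b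
          + T.wBranch (P.concat hadj).support q * T.d b u := by
      intro q hqF
      have hq := List.mem_toFinset.1 hqF
      have h3 := hmeet_u.2 q hq
      rw [h3, T.d_comm b q]; ring
    rw [Finset.sum_congr rfl hsplit2, Finset.sum_add_distrib, ← Finset.sum_mul]
    simp only [hshift]
    rw [hsum', T.d_self u, T.d_self b, hdP]
    ring
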